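/- Let f : [0,∞) → ℝ be such that f(0) = 1, f is non-negative, non-increasing, f ∈ W¹₁(0,∞) (f and its weak derivative are integrable), and ϱ ↦ ϱ f(ϱ) is integrable on (0,∞). Then for every ω ≠ 0 the sine transform f̂_s(ω) = ∫₀^∞ f(ϱ) sin(ϱω) dϱ satisfies f̂_s(ω)/ω > 0, and ∫₀^∞ ϱ f(ϱ) dϱ > 0. -/

import Mathlib

open MeasureTheory Set Filter

lemma helper1 {g : ℝ → ℝ} {A B : ℝ}
    (hae : g =ᵐ[volume.restrict (Set.Ioc A B)] 0) {u : ℝ} (hu : u ∈ Set.Ioo A B)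
    (hc : ContinuousAt g u) : g u = 0 := by
  by_contra hne
  have h1 : ∀ᶠ z in nhds u, g z ≠ 0 := hc.eventually_ne hne
  have h2 : {z | g z ≠ 0} ∩ Set.Ioo A B ∈ nhds u :=
    Filter.inter_mem h1 (Ioo_mem_nhds hu.1 hu.2)
  obtain ⟨ε, hε, hball⟩ := Metric.mem_nhds_iff.mp h2
  have h0 : volume ({z | g z ≠ 0} ∩ Set.Ioc A B) = 0 := by
    rw [← Measure.restrict_apply' measurableSet_Ioc]
    have := hae
    rw [Filter.EventuallyEq, ae_iff] at this
    simpa using this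
  have h4 : volume (Metric.ball u ε) = 0 := by
    refine measure_mono_null (hball.trans ?_) h0
    exact fun z hz => ⟨hz.1, Set.Ioo_subset_Ioc_self hz.2⟩
  rw [Real.volume_ball] at h4
  simp [ENNReal.ofReal_eq_zero] at h4
  linarith

lemma helper2 {g : ℝ → ℝ} {A B x : ℝ} (hAB : A < B) (hx : x ∈ Set.Icc A B)
    (hg : ContinuousWithinAt g (Set.Icc A B) x)
    (hzero : ∀ u ∈ Set.Ioo A B, g u = 0) : g x = 0 := by
  haveI : (nhdsWithin x (Set.Ioo A B)).NeBot := by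
    rw [← mem_closure_iff_nhdsWithin_neBot, closure_Ioo hAB.ne]
    exact hx
  have t1 : Filter.Tendsto g (nhdsWithin x (Set.Ioo A B)) (nhds (g x)) :=
    (hg.mono Set.Ioo_subset_Icc_self).tendsto
  have t2 : Filter.Tendsto g (nhdsWithin x (Set.Ioo A B)) (nhds 0) := by
    refine Filter.Tendsto.congr' ?_ tendsto_const_nhds
    exact Filter.eventually_of_mem self_mem_nhdsWithin (fun u hu => (hzero u hu).symm)
  exact tendsto_nhds_unique t1 t2

/-- Lemma A.2: if f(0) = 1, f is non-negative and non-increasing on [0,∞), f ∈ W¹₁(0,∞)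
(expressed as absolute continuity with integrable derivative), and ϱ f(ϱ) is integrable,
then the sine transform satisfies f̂_s(ω)/ω > 0 for all ω ≠ 0, and ∫₀^∞ ϱ f(ϱ) dϱ > 0. -/
theorem stmt6 (f : ℝ → ℝ) (hf0 : f 0 = 1)
    (hnn : ∀ x, 0 ≤ x → 0 ≤ f x)
    (hmono : AntitoneOn f (Set.Ici 0))
    (hint : IntegrableOn f (Set.Ioi 0))
    (hW : ∃ f' : ℝ → ℝ, IntegrableOn f' (Set.Ioi 0) ∧
      ∀ x y : ℝ, 0 ≤ x → x ≤ y → f y - f x = ∫ t in x..y, f' t)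
    (hrho : IntegrableOn (fun ϱ => ϱ * f ϱ) (Set.Ioi 0)) :
    (∀ ω : ℝ, ω ≠ 0 → 0 < (∫ ϱ in Set.Ioi (0:ℝ), f ϱ * Real.sin (ϱ * ω)) / ω) ∧
      0 < ∫ ϱ in Set.Ioi (0:ℝ), ϱ * f ϱ := by
  obtain ⟨f', hf'int, hFTC⟩ := hW
  -- continuity of f on [0,∞)
  set g : ℝ → ℝ := (Set.Ioi (0:ℝ)).indicator f' with hgdef
  have hgint : Integrable g := hf'int.integrable_indicator measurableSet_Ioi
  have hfeq : ∀ x ∈ Set.Ici (0:ℝ), f x = 1 + ∫ t in (0:ℝ)..x, g t := by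
    intro x hx
    have hx0 : (0:ℝ) ≤ x := hx
    have h := hFTC 0 x le_rfl hx0
    rw [hf0] at h
    have h2 : ∫ t in (0:ℝ)..x, g t = ∫ t in (0:ℝ)..x, f' t := by
      rw [intervalIntegral.integral_of_le hx0, intervalIntegral.integral_of_le hx0,
        hgdef, setIntegral_indicator measurableSet_Ioi,
        Set.inter_eq_self_of_subset_left Set.Ioc_subset_Ioi_self]
    rw [h2]
    linarith
  have hcont : ContinuousOn f (Set.Ici 0) :=
    ((continuous_const.add (hgint.continuous_primitive 0)).continuousOn).congr hfeq
  have hfc : ∀ v : ℝ, 0 < v → ContinuousAt f v :=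
    fun v hv => hcont.continuousAt (Ici_mem_nhds hv)
  have hle1 : ∀ x, 0 ≤ x → f x ≤ 1 := by
    intro x hx
    have := hmono (Set.mem_Ici.2 le_rfl) (Set.mem_Ici.2 hx) hx
    rwa [hf0] at this
  have key : ∀ ω : ℝ, 0 < ω → 0 < ∫ ϱ in Set.Ioi (0:ℝ), f ϱ * Real.sin (ϱ * ω) := by
    intro ω hω
    set T : ℝ := Real.pi / ω with hTdef
    have hTpos : 0 < T := div_pos Real.pi_pos hω
    have hTω : T * ω = Real.pi := div_mul_cancel₀ _ (ne_of_gt hω)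
    set F : ℝ → ℝ := fun ϱ => f ϱ * Real.sin (ϱ * ω) with hFdef
    -- integrability of F on (0, ∞)
    have hintF : IntegrableOn F (Set.Ioi 0) := by
      refine Integrable.mono hint
        (hint.aestronglyMeasurable.mul (Continuous.aestronglyMeasurable (by fun_prop)))
        (Filter.Eventually.of_forall fun x => ?_)
      simp only [hFdef, norm_mul, Real.norm_eq_abs]
      calc |f x| * |Real.sin (x * ω)| ≤ |f x| * 1 :=
            mul_le_mul_of_nonneg_left (Real.abs_sin_le_one _) (abs_nonneg _)
        _ = |f x| := mul_one _
    -- interval integrability of F within [0,∞)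
    have hII : ∀ a b : ℝ, 0 ≤ a → a ≤ b → IntervalIntegrable F volume a b := by
      intro a b ha hab
      rw [intervalIntegrable_iff_integrableOn_Ioc_of_le hab]
      exact hintF.mono_set (fun x hx => lt_of_le_of_lt ha hx.1)
    -- the decomposition of (0,∞) into consecutive intervals of length 2T
    set s : ℕ → Set ℝ := fun k => Set.Ioc (2*(k:ℝ)*T) (2*(k:ℝ)*T + 2*T) with hsdef
    have hmeas : ∀ k, MeasurableSet (s k) := fun k => measurableSet_Ioc
    have hdisj : Pairwise (Function.onFun Disjoint s) := by
      intro i j hij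
      simp only [Function.onFun, hsdef, Set.Ioc_disjoint_Ioc]
      rcases hij.lt_or_gt with h | h
      · have : (i:ℝ) + 1 ≤ (j:ℝ) := by exact_mod_cast Nat.succ_le_of_lt h
        refine le_trans (min_le_left _ _) (le_trans ?_ (le_max_right _ _))
        nlinarith
      · have : (j:ℝ) + 1 ≤ (i:ℝ) := by exact_mod_cast Nat.succ_le_of_lt h
        refine le_trans (min_le_right _ _) (le_trans ?_ (le_max_left _ _))
        nlinarith
    have hunion : (⋃ k, s k) = Set.Ioi 0 := by
      ext x
      simp only [Set.mem_iUnion, hsdef, Set.mem_Ioc, Set.mem_Ioi]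
      constructor
      · rintro ⟨k, hk1, hk2⟩
        have : (0:ℝ) ≤ 2*(k:ℝ)*T := by positivity
        linarith
      · intro hx
        have h2T : (0:ℝ) < 2*T := by linarith
        set c : ℕ := ⌈x / (2*T)⌉₊ with hcdef
        have hc1 : 1 ≤ c := Nat.one_le_iff_ne_zero.2 (by
          simp only [hcdef, ne_eq, Nat.ceil_eq_zero, not_le]
          positivity)
        refine ⟨c - 1, ?_, ?_⟩
        · have h1 : ((c:ℝ) - 1) < x / (2*T) := by
            have : (c - 1 : ℕ) < c := Nat.sub_lt hc1 one_pos
            have := (Nat.lt_ceil).1 (hcdef ▸ this)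
            push_cast [← hcdef, Nat.cast_sub hc1] at this ⊢
            linarith
          have hcast : ((c - 1 : ℕ) : ℝ) = (c:ℝ) - 1 := by push_cast [Nat.cast_sub hc1]; ring
          rw [hcast]
          calc 2*((c:ℝ)-1)*T = ((c:ℝ)-1) * (2*T) := by ring
            _ < x := (lt_div_iff₀ h2T).1 h1
        · have h2 : x / (2*T) ≤ (c:ℝ) := Nat.le_ceil _
          have hcast : ((c - 1 : ℕ) : ℝ) = (c:ℝ) - 1 := by push_cast [Nat.cast_sub hc1]; ring
          rw [hcast]
          have : x ≤ (c:ℝ) * (2*T) := by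
            rw [div_le_iff₀ h2T] at h2; linarith
          nlinarith
    -- HasSum decomposition
    have hsum : HasSum (fun k => ∫ ϱ in s k, F ϱ) (∫ ϱ in Set.Ioi (0:ℝ), F ϱ) := by
      have := hasSum_integral_iUnion (μ := volume) (f := F) hmeas hdisj (hunion ▸ hintF)
      rwa [hunion] at this
    -- pointwise identity used to fold the second half-period onto the first
    have hfold : ∀ u : ℝ, (f u - f (u + T)) * Real.sin (u * ω) = F u + F (u + T) := by
      intro u
      have : (u + T) * ω = u * ω + Real.pi := by rw [← hTω]; ring
      simp only [hFdef, this, Real.sin_add_pi]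
      ring
    -- each piece equals an integral of (f u - f(u+T)) sin(uω)
    set c : ℕ → ℝ := fun k =>
      ∫ u in (2*(k:ℝ)*T)..(2*(k:ℝ)*T + T), (f u - f (u + T)) * Real.sin (u * ω) with hc
    have hIIshift : ∀ A : ℝ, 0 ≤ A →
        IntervalIntegrable (fun u => F (u + T)) volume A (A + T) := by
      intro A hA
      have h := (hII (A + T) (A + T + T) (by linarith) (by linarith)).comp_add_right T
      have e1 : A + T - T = A := by ring
      have e2 : A + T + T - T = A + T := by ring
      rwa [e1, e2] at h
    have hck : ∀ k : ℕ, (∫ ϱ in s k, F ϱ) = c k := by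
      intro k
      set A : ℝ := 2*(k:ℝ)*T with hAdef
      have hA0 : 0 ≤ A := by positivity
      have e1 : (∫ ϱ in s k, F ϱ) = ∫ u in A..(A + 2*T), F u :=
        (intervalIntegral.integral_of_le (by linarith)).symm
      have e2 : (∫ u in A..(A + T), F u) + (∫ u in (A + T)..(A + 2*T), F u)
          = ∫ u in A..(A + 2*T), F u :=
        intervalIntegral.integral_add_adjacent_intervals
          (hII A (A + T) hA0 (by linarith)) (hII (A + T) (A + 2*T) (by linarith) (by linarith))
      have e3 : (∫ u in (A + T)..(A + 2*T), F u) = ∫ u in A..(A + T), F (u + T) := by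
        rw [intervalIntegral.integral_comp_add_right F T]
        congr 1 <;> ring
      have e4 : (∫ u in A..(A + T), F u) + (∫ u in A..(A + T), F (u + T))
          = ∫ u in A..(A + T), (F u + F (u + T)) :=
        (intervalIntegral.integral_add (hII A (A + T) hA0 (by linarith)) (hIIshift A hA0)).symm
      have e5 : (∫ u in A..(A + T), (F u + F (u + T)))
          = ∫ u in A..(A + T), (f u - f (u + T)) * Real.sin (u * ω) :=
        intervalIntegral.integral_congr (fun u _ => (hfold u).symm)
      rw [e1, ← e2, e3, e4, e5, hc]
    -- nonnegativity of the sine factor on [2kT, 2kT + T]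
    have hsin_nonneg : ∀ k : ℕ, ∀ u ∈ Set.Icc (2*(k:ℝ)*T) (2*(k:ℝ)*T + T),
        0 ≤ Real.sin (u * ω) := by
      intro k u hu
      have h1 : u * ω - (k:ℝ) * (2 * Real.pi) + (k:ℤ) * (2 * Real.pi) = u * ω := by
        push_cast; ring
      rw [← h1, Real.sin_add_int_mul_two_pi]
      apply Real.sin_nonneg_of_nonneg_of_le_pi
      · have := mul_le_mul_of_nonneg_right hu.1 (le_of_lt hω)
        nlinarith [this, hTω]
      · have := mul_le_mul_of_nonneg_right hu.2 (le_of_lt hω)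
        nlinarith [this, hTω]
    have hdiffnn : ∀ u : ℝ, 0 ≤ u → 0 ≤ f u - f (u + T) := by
      intro u hu
      have := hmono (Set.mem_Ici.2 hu)
        (Set.mem_Ici.2 (show (0:ℝ) ≤ u + T by linarith)) (le_add_of_nonneg_right hTpos.le)
      linarith
    have hcnn : ∀ k : ℕ, 0 ≤ c k := by
      intro k
      have hA0 : (0:ℝ) ≤ 2*(k:ℝ)*T := by positivity
      refine intervalIntegral.integral_nonneg (by linarith) fun u hu => ?_
      exact mul_nonneg (hdiffnn u (le_trans hA0 hu.1)) (hsin_nonneg k u hu)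
    -- positivity: suppose not
    by_contra hS
    push_neg at hS
    have hczero : ∀ k : ℕ, c k = 0 := by
      intro k
      have hle : c k ≤ ∫ ϱ in Set.Ioi (0:ℝ), F ϱ := by
        have := le_hasSum hsum k (fun j _ => by rw [hck]; exact hcnn j)
        rwa [hck] at this
      exact le_antisymm (le_trans hle hS) (hcnn k)
    -- induction: f(2kT) = 1 for all k
    have hone : ∀ k : ℕ, f (2*(k:ℝ)*T) = 1 := by
      intro k
      induction k with
      | zero => simpa using hf0
      | succ n ih =>
        set A : ℝ := 2*(n:ℝ)*T with hAdef
        have hA0 : 0 ≤ A := by positivity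
        have hAM : A < A + T := by linarith
        -- the integrand vanishes a.e. on Ioc A (A+T)
        have hIOn : IntegrableOn (fun u => (f u - f (u + T)) * Real.sin (u * ω))
            (Set.Ioc A (A + T)) := by
          have h := ((hII A (A + T) hA0 (by linarith)).add (hIIshift A hA0)).1
          refine h.congr_fun (fun u _ => (hfold u).symm) measurableSet_Ioc
        have hnnae : 0 ≤ᵐ[volume.restrict (Set.Ioc A (A + T))]
            fun u => (f u - f (u + T)) * Real.sin (u * ω) := by
          refine (ae_restrict_iff' measurableSet_Ioc).2 (Filter.Eventually.of_forall ?_)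
          intro u hu
          exact mul_nonneg (hdiffnn u (le_trans hA0 (le_of_lt hu.1)))
            (hsin_nonneg n u ⟨le_of_lt hu.1, hu.2⟩)
        have hzero : (∫ u in Set.Ioc A (A + T), (f u - f (u + T)) * Real.sin (u * ω)) = 0 := by
          have := hczero n
          rw [hc] at this
          rwa [← intervalIntegral.integral_of_le (le_of_lt hAM)]
        have hae := (setIntegral_eq_zero_iff_of_nonneg_ae hnnae hIOn).1 hzero
        -- pointwise vanishing on the open interval
        have hptw : ∀ u ∈ Set.Ioo A (A + T), (f u - f (u + T)) * Real.sin (u * ω) = 0 := by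
          intro u hu
          refine helper1 hae hu ?_
          have hu0 : 0 < u := lt_of_le_of_lt hA0 hu.1
          have hshift : ContinuousAt (fun v => f (v + T)) u :=
            ContinuousAt.comp (g := f) (f := fun v : ℝ => v + T) (x := u)
              (hfc (u + T) (by linarith)) ((continuous_add_right T).continuousAt)
          have hcA : ContinuousAt (fun u => f u - f (u + T)) u := (hfc u hu0).sub hshift
          exact hcA.mul (by fun_prop)
        -- sin is positive on the open interval, so f u = f (u+T) there
        have hsinpos : ∀ u ∈ Set.Ioo A (A + T), 0 < Real.sin (u * ω) := by
          intro u hu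
          have h1 : u * ω - (n:ℝ) * (2 * Real.pi) + (n:ℤ) * (2 * Real.pi) = u * ω := by
            push_cast; ring
          rw [← h1, Real.sin_add_int_mul_two_pi]
          apply Real.sin_pos_of_pos_of_lt_pi
          · have := mul_lt_mul_of_pos_right hu.1 hω
            nlinarith [this, hTω]
          · have := mul_lt_mul_of_pos_right hu.2 hω
            nlinarith [this, hTω]
        have hdiff0 : ∀ u ∈ Set.Ioo A (A + T), f u - f (u + T) = 0 := by
          intro u hu
          rcases mul_eq_zero.1 (hptw u hu) with h | h
          · exact h
          · exact absurd h (ne_of_gt (hsinpos u hu))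
        -- extend to the closed interval by continuity
        have hgcont : ContinuousOn (fun u => f u - f (u + T)) (Set.Icc A (A + T)) := by
          refine ContinuousOn.sub ?_ ?_
          · exact hcont.mono (fun u hu => le_trans hA0 hu.1)
          · refine ContinuousOn.comp hcont ((continuous_add_right T).continuousOn) ?_
            intro u hu
            have h0u : 0 ≤ u := le_trans hA0 hu.1
            simp only [Set.mem_Ici]
            linarith
        have hendA : f A - f (A + T) = 0 :=
          helper2 (g := fun u => f u - f (u + T)) hAM (Set.left_mem_Icc.2 (le_of_lt hAM))
            (hgcont A (Set.left_mem_Icc.2 (le_of_lt hAM))) hdiff0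
        have hendB : f (A + T) - f (A + T + T) = 0 :=
          helper2 (g := fun u => f u - f (u + T)) hAM (Set.right_mem_Icc.2 (le_of_lt hAM))
            (hgcont (A + T) (Set.right_mem_Icc.2 (le_of_lt hAM))) hdiff0
        have : f (A + T + T) = 1 := by
          have hfA : f A = 1 := ih
          linarith
        have hcast : 2*((n:ℝ)+1)*T = A + T + T := by rw [hAdef]; ring
        rw [show ((n+1 : ℕ):ℝ) = (n:ℝ)+1 by push_cast; ring, hcast]
        exact this
    -- hence f ≡ 1 on [0,∞), contradicting integrability
    have hf1 : ∀ x ∈ Set.Ioi (0:ℝ), f x = (1:ℝ) := by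
      intro x hx
      have hx0 : (0:ℝ) < x := hx
      obtain ⟨n, hn⟩ := exists_nat_ge (x / (2*T))
      have hxn : x ≤ 2*(n:ℝ)*T := by
        rw [div_le_iff₀ (by linarith : (0:ℝ) < 2*T)] at hn
        nlinarith
      have h1 : f x ≤ 1 := hle1 x (le_of_lt hx0)
      have h2 : (1:ℝ) ≤ f x := by
        have := hmono (Set.mem_Ici.2 (le_of_lt hx0))
          (Set.mem_Ici.2 (by positivity : (0:ℝ) ≤ 2*(n:ℝ)*T)) hxn
        rw [hone n] at this
        linarith
      linarith
    have hcontra : IntegrableOn (fun _ : ℝ => (1:ℝ)) (Set.Ioi 0) :=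
      hint.congr_fun hf1 measurableSet_Ioi
    have := integrable_const_iff.1 hcontra
    simp [Measure.restrict_apply_univ, Real.volume_Ioi] at this
    exact absurd this.measure_univ_lt_top (by simp [Measure.restrict_apply_univ, Real.volume_Ioi])
  constructor
  · intro ω hω
    rcases lt_or_gt_of_ne hω with hneg | hpos
    · have h1 : (∫ ϱ in Set.Ioi (0:ℝ), f ϱ * Real.sin (ϱ * ω))
          = -∫ ϱ in Set.Ioi (0:ℝ), f ϱ * Real.sin (ϱ * (-ω)) := by
        rw [← integral_neg]
        refine integral_congr_ae (Filter.Eventually.of_forall fun ϱ => ?_)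
        show f ϱ * Real.sin (ϱ * ω) = -(f ϱ * Real.sin (ϱ * -ω))
        rw [show ϱ * ω = -(ϱ * -ω) by ring, Real.sin_neg]
        ring
      have h2 := key (-ω) (by linarith)
      rw [h1]
      have := div_neg_of_pos_of_neg h2 hneg
      linarith [neg_div ω (∫ ϱ in Set.Ioi (0:ℝ), f ϱ * Real.sin (ϱ * (-ω)))]
    · exact div_pos (key ω hpos) hpos
  · -- second part
    have h0 : ContinuousWithinAt f (Set.Ici 0) 0 := hcont 0 (Set.mem_Ici.2 le_rfl)
    have hev : ∀ᶠ x in nhdsWithin 0 (Set.Ici 0), (1:ℝ)/2 < f x := by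
      refine h0.tendsto.eventually ?_
      rw [hf0]
      exact eventually_gt_nhds (by norm_num)
    obtain ⟨ε, hε, hball⟩ := Metric.mem_nhdsWithin_iff.mp hev
    set δ := ε/2 with hδdef
    have hδ : 0 < δ := by positivity
    have hhalf : ∀ x ∈ Set.Ioc 0 δ, (1:ℝ)/2 < f x := by
      intro x hx
      refine hball ⟨?_, le_of_lt hx.1⟩
      simp only [Metric.mem_ball, Real.dist_eq, sub_zero]
      rw [abs_of_pos hx.1]
      calc x ≤ δ := hx.2
        _ < ε := by rw [hδdef]; linarith
    have hnonneg : 0 ≤ᵐ[volume.restrict (Set.Ioi 0)] fun ϱ => ϱ * f ϱ := by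
      refine (ae_restrict_iff' measurableSet_Ioi).2 (Filter.Eventually.of_forall ?_)
      exact fun x hx => mul_nonneg (le_of_lt hx) (hnn x (le_of_lt hx))
    rw [setIntegral_pos_iff_support_of_nonneg_ae hnonneg hrho]
    have hsub : Set.Ioc 0 δ ⊆ Function.support (fun ϱ => ϱ * f ϱ) ∩ Set.Ioi 0 := by
      intro x hx
      refine ⟨?_, hx.1⟩
      simp only [Function.mem_support]
      exact ne_of_gt (mul_pos hx.1 (lt_trans (by norm_num) (hhalf x hx)))
    calc (0:ENNReal) < ENNReal.ofReal δ := by simpa using hδ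
      _ = volume (Set.Ioc 0 δ) := by rw [Real.volume_Ioc, sub_zero]
      _ ≤ _ := measure_mono hsub
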